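/- Let 1 < α ≤ 2, 0 ≤ β ≤ α - 1, a < b, K > 0 with K(α-1)^(α-1)(b-a)^α/((α-β)^α Γ(α+1)) < 1. Then the operator T on C([a,b]) defined by (Tu)(t) = ∫ₐᵇ G(t,s) f(s,u(s)) ds, where f is continuous and K-Lipschitz in its second variable, is a contraction in the sup norm with contraction constant K(α-1)^(α-1)(b-a)^α/((α-β)^α Γ(α+1)). -/

import Mathlib

noncomputable def G (a b α β t s : ℝ) : ℝ :=
  if s ≤ t then
    (1 / Real.Gamma α) *
      ((t - a) ^ (α - 1) * (b - s) ^ (α - 1 - β) / (b - a) ^ (α - 1 - β) -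
        (t - s) ^ (α - 1))
  else
    (1 / Real.Gamma α) *
      ((t - a) ^ (α - 1) * (b - s) ^ (α - 1 - β) / (b - a) ^ (α - 1 - β))

open MeasureTheory intervalIntegral Set

namespace Stmt13Aux

lemma measG (a b α β t : ℝ) : Measurable (fun s => G a b α β t s) := by
  unfold G
  apply Measurable.ite (measurableSet_le measurable_id measurable_const) <;>
  · apply Measurable.const_mul
    fun_prop

lemma integrable_aux {a b : ℝ} (hab : a ≤ b) {g : ℝ → ℝ} (hg : Measurable g) {M : ℝ}
    (hM : ∀ s ∈ Set.Icc a b, |g s| ≤ M) : IntervalIntegrable g volume a b := by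
  rw [intervalIntegrable_iff_integrableOn_Ioc_of_le hab]
  apply Measure.integrableOn_of_bounded (M := M)
  · simp [Real.volume_Ioc]
  · exact hg.aestronglyMeasurable
  · filter_upwards [ae_restrict_mem measurableSet_Ioc] with s hs
    rw [Real.norm_eq_abs]
    exact hM s (Set.Ioc_subset_Icc_self hs)

variable {α β a b : ℝ}

lemma G_bdd (hα : 1 < α) (hβ : 0 ≤ β) (hβα : β ≤ α - 1) (hab : a < b)
    {t s : ℝ} (ht : t ∈ Set.Icc a b) (hs : s ∈ Set.Icc a b) :
    |G a b α β t s| ≤ 1 / Real.Gamma α * (2 * (b - a) ^ (α - 1)) := by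
  have hΓ : 0 < Real.Gamma α := Real.Gamma_pos_of_pos (by linarith)
  have hγ : 0 ≤ α - 1 - β := by linarith
  have hba : 0 < b - a := by linarith
  have hA0 : 0 ≤ (t - a) ^ (α - 1) * (b - s) ^ (α - 1 - β) / (b - a) ^ (α - 1 - β) := by
    apply div_nonneg (mul_nonneg (Real.rpow_nonneg (by linarith [ht.1]) _)
      (Real.rpow_nonneg (by linarith [hs.2]) _)) (Real.rpow_nonneg hba.le _)
  have hA1 : (t - a) ^ (α - 1) * (b - s) ^ (α - 1 - β) / (b - a) ^ (α - 1 - β)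
      ≤ (b - a) ^ (α - 1) := by
    rw [div_le_iff₀ (Real.rpow_pos_of_pos hba _)]
    have h1 : (t - a) ^ (α - 1) ≤ (b - a) ^ (α - 1) :=
      Real.rpow_le_rpow (by linarith [ht.1]) (by linarith [ht.2]) (by linarith)
    have h2 : (b - s) ^ (α - 1 - β) ≤ (b - a) ^ (α - 1 - β) :=
      Real.rpow_le_rpow (by linarith [hs.2]) (by linarith [hs.1]) hγ
    have h3 : 0 ≤ (t - a) ^ (α - 1) := Real.rpow_nonneg (by linarith [ht.1]) _
    have h4 : 0 ≤ (b - s) ^ (α - 1 - β) := Real.rpow_nonneg (by linarith [hs.2]) _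
    nlinarith [Real.rpow_nonneg hba.le (α - 1)]
  unfold G
  split_ifs with h
  · rw [mul_comm, abs_mul, abs_of_pos (by positivity : (0:ℝ) < 1 / Real.Gamma α), mul_comm]
    apply mul_le_mul_of_nonneg_left _ (by positivity)
    have hB0 : 0 ≤ (t - s) ^ (α - 1) := Real.rpow_nonneg (by linarith) _
    have hB1 : (t - s) ^ (α - 1) ≤ (b - a) ^ (α - 1) :=
      Real.rpow_le_rpow (by linarith) (by linarith [hs.1, ht.2]) (by linarith)
    rw [abs_sub_le_iff]
    constructor <;> nlinarith
  · rw [mul_comm, abs_mul, abs_of_pos (by positivity : (0:ℝ) < 1 / Real.Gamma α), mul_comm]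
    apply mul_le_mul_of_nonneg_left _ (by positivity)
    rw [abs_of_nonneg hA0]
    nlinarith [Real.rpow_nonneg hba.le (α - 1)]

lemma G_nonneg (hα : 1 < α) (hβ : 0 ≤ β) (hβα : β ≤ α - 1) (hab : a < b)
    {t s : ℝ} (ht : t ∈ Set.Icc a b) (hs : s ∈ Set.Icc a b) : 0 ≤ G a b α β t s := by
  have hΓ : 0 < Real.Gamma α := Real.Gamma_pos_of_pos (by linarith)
  have hγ : 0 ≤ α - 1 - β := by linarith
  have hba : 0 < b - a := by linarith
  have hA0 : 0 ≤ (t - a) ^ (α - 1) * (b - s) ^ (α - 1 - β) / (b - a) ^ (α - 1 - β) := by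
    apply div_nonneg (mul_nonneg (Real.rpow_nonneg (by linarith [ht.1]) _)
      (Real.rpow_nonneg (by linarith [hs.2]) _)) (Real.rpow_nonneg hba.le _)
  unfold G
  split_ifs with h
  · apply mul_nonneg (by positivity)
    rw [sub_nonneg]
    rcases eq_or_lt_of_le hs.2 with hsb | hsb
    · have htb : t = b := le_antisymm ht.2 (hsb ▸ h)
      have hts : t - s = 0 := by rw [htb, hsb]; ring
      rw [hts, Real.zero_rpow (by linarith)]
      exact hA0
    · have h1 : t - s ≤ (t - a) * ((b - s) / (b - a)) := by
        rw [mul_div_assoc', le_div_iff₀ hba]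
        nlinarith [mul_nonneg (sub_nonneg.mpr hs.1) (sub_nonneg.mpr ht.2)]
      calc (t - s) ^ (α - 1) ≤ ((t - a) * ((b - s) / (b - a))) ^ (α - 1) :=
            Real.rpow_le_rpow (by linarith) h1 (by linarith)
        _ = (t - a) ^ (α - 1) * ((b - s) / (b - a)) ^ (α - 1) :=
            Real.mul_rpow (by linarith [ht.1]) (div_nonneg (by linarith [hs.2]) hba.le)
        _ ≤ (t - a) ^ (α - 1) * ((b - s) / (b - a)) ^ (α - 1 - β) := by
            apply mul_le_mul_of_nonneg_left _ (Real.rpow_nonneg (by linarith [ht.1]) _)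
            apply Real.rpow_le_rpow_of_exponent_ge (div_pos (by linarith) hba)
              (div_le_one_of_le₀ (by linarith [hs.1]) hba.le) (by linarith)
        _ = (t - a) ^ (α - 1) * (b - s) ^ (α - 1 - β) / (b - a) ^ (α - 1 - β) := by
            rw [Real.div_rpow (by linarith) hba.le, mul_div_assoc]
  · exact mul_nonneg (by positivity) hA0

lemma G_integral (hα : 1 < α) (hβ : 0 ≤ β) (hβα : β ≤ α - 1) (hab : a < b)
    {t : ℝ} (ht : t ∈ Set.Icc a b) :
    ∫ s in a..b, G a b α β t s
      = 1 / Real.Gamma α * ((t - a) ^ (α - 1) * (b - a) / (α - β) - (t - a) ^ α / α) := by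
  have hΓ : 0 < Real.Gamma α := Real.Gamma_pos_of_pos (by linarith)
  have hγ : 0 ≤ α - 1 - β := by linarith
  have hba : 0 < b - a := by linarith
  set C := 1 / Real.Gamma α * ((t - a) ^ (α - 1) / (b - a) ^ (α - 1 - β)) with hC
  set P : ℝ → ℝ := fun s => C * (b - s) ^ (α - 1 - β) with hP
  set Q : ℝ → ℝ := fun s => if s ≤ t then 1 / Real.Gamma α * (t - s) ^ (α - 1) else 0 with hQ
  have key : ∀ s, G a b α β t s = P s - Q s := by
    intro s
    simp only [hP, hQ, hC]
    unfold G
    split_ifs <;> ring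
  have hPint : IntervalIntegrable P volume a b := by
    apply integrable_aux hab.le (by fun_prop) (M := |C| * (b - a) ^ (α - 1 - β))
    intro s hs
    rw [abs_mul]
    exact mul_le_mul_of_nonneg_left (by
      rw [abs_of_nonneg (Real.rpow_nonneg (by linarith [hs.2]) _)]
      exact Real.rpow_le_rpow (by linarith [hs.2]) (by linarith [hs.1]) hγ) (abs_nonneg _)
  have hQint : IntervalIntegrable Q volume a b := by
    apply integrable_aux hab.le (M := 1 / Real.Gamma α * (b - a) ^ (α - 1))
    · apply Measurable.ite (measurableSet_le measurable_id measurable_const) _ measurable_const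
      fun_prop
    · intro s hs
      simp only [hQ]
      split_ifs with h
      · rw [abs_mul, abs_of_pos (by positivity : (0:ℝ) < 1 / Real.Gamma α),
          abs_of_nonneg (Real.rpow_nonneg (by linarith) _)]
        exact mul_le_mul_of_nonneg_left
          (Real.rpow_le_rpow (by linarith) (by linarith [hs.1, ht.2]) (by linarith))
          (by positivity)
      · rw [abs_zero]
        positivity
  have hPval : ∫ s in a..b, P s = C * ((b - a) ^ (α - 1 - β + 1) / (α - 1 - β + 1)) := by
    rw [intervalIntegral.integral_const_mul]
    congr 1
    have := intervalIntegral.integral_comp_sub_left (a := a) (b := b)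
      (fun x => x ^ (α - 1 - β)) b
    rw [this, sub_self, integral_rpow (Or.inl (by linarith)),
      Real.zero_rpow (by linarith), sub_zero]
  have hQval : ∫ s in a..b, Q s = 1 / Real.Gamma α * ((t - a) ^ α / α) := by
    have h1 : IntervalIntegrable Q volume a t :=
      hQint.mono_set (by rw [Set.uIcc_of_le hab.le, Set.uIcc_of_le ht.1]
                         exact Set.Icc_subset_Icc le_rfl ht.2)
    have h2 : IntervalIntegrable Q volume t b :=
      hQint.mono_set (by rw [Set.uIcc_of_le hab.le, Set.uIcc_of_le ht.2]
                         exact Set.Icc_subset_Icc ht.1 le_rfl)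
    rw [← intervalIntegral.integral_add_adjacent_intervals h1 h2]
    have e2 : ∫ s in t..b, Q s = 0 := by
      rw [intervalIntegral.integral_congr (g := fun _ => (0:ℝ))]
      · simp
      · intro s hs
        rw [Set.uIcc_of_le ht.2] at hs
        simp only [hQ]
        split_ifs with h
        · have : s = t := le_antisymm h hs.1
          rw [this, sub_self, Real.zero_rpow (by linarith), mul_zero]
        · rfl
    have e1 : ∫ s in a..t, Q s = 1 / Real.Gamma α * ((t - a) ^ α / α) := by
      rw [intervalIntegral.integral_congr
        (g := fun s => 1 / Real.Gamma α * (t - s) ^ (α - 1))]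
      · rw [intervalIntegral.integral_const_mul]
        congr 1
        have := intervalIntegral.integral_comp_sub_left (a := a) (b := t)
          (fun x => x ^ (α - 1)) t
        rw [this, sub_self, integral_rpow (Or.inl (by linarith)),
          Real.zero_rpow (by linarith), sub_zero, show α - 1 + 1 = α by ring]
      · intro s hs
        rw [Set.uIcc_of_le ht.1] at hs
        simp only [hQ, if_pos hs.2]
    rw [e1, e2, add_zero]
  have hbapow : (b - a) ^ (α - 1 - β + 1) = (b - a) ^ (α - 1 - β) * (b - a) := by
    rw [Real.rpow_add hba, Real.rpow_one]
  have hne : (b - a) ^ (α - 1 - β) ≠ 0 := (Real.rpow_pos_of_pos hba _).ne'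
  have hαβne : α - β ≠ 0 := by linarith
  have hαβ : α - 1 - β + 1 = α - β := by ring
  have hCval : C * ((b - a) ^ (α - 1 - β + 1) / (α - 1 - β + 1))
      = 1 / Real.Gamma α * ((t - a) ^ (α - 1) * (b - a) / (α - β)) := by
    rw [hC, hbapow, hαβ]
    field_simp
  rw [intervalIntegral.integral_congr (g := fun s => P s - Q s) (fun s _ => key s),
    intervalIntegral.integral_sub hPint hQint, hPval, hQval, hCval]
  ring

end Stmt13Aux

namespace Stmt13Aux2
variable {α β a b : ℝ}

lemma phi_max (hα : 1 < α) (hα2 : α ≤ 2) (hβ : 0 ≤ β) (hβα : β ≤ α - 1) (hab : a < b)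
    {x : ℝ} (hx : x ∈ Set.Icc (0:ℝ) (b - a)) :
    x ^ (α - 1) * (b - a) / (α - β) - x ^ α / α
      ≤ (α - 1) ^ (α - 1) * (b - a) ^ α / ((α - β) ^ α * α) := by
  have ha1 : 0 < α - 1 := by linarith
  have hm1 : 1 ≤ α - β := by linarith
  have hm : 0 < α - β := by linarith
  have hc : 0 < b - a := by linarith
  set c := b - a with hcdef
  set m := α - β with hmdef
  set x0 := (α - 1) * c / m with hx0def
  set φ : ℝ → ℝ := fun y => y ^ (α - 1) * c / m - y ^ α / α with hφdef
  have hx0 : 0 < x0 := by positivity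
  have hx0c : x0 ≤ c := by
    rw [hx0def, div_le_iff₀ hm]
    nlinarith
  have hcont : Continuous φ := by
    have h1 : Continuous fun y : ℝ => y ^ (α - 1) :=
      continuous_iff_continuousAt.mpr fun y =>
        Real.continuousAt_rpow_const y _ (Or.inr (by linarith))
    have h2 : Continuous fun y : ℝ => y ^ α :=
      continuous_iff_continuousAt.mpr fun y =>
        Real.continuousAt_rpow_const y _ (Or.inr (by linarith))
    exact ((h1.mul continuous_const).div_const m).sub (h2.div_const α)
  have hderiv : ∀ y : ℝ, 0 < y → HasDerivAt φ (y ^ (α - 2) * (x0 - y)) y := by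
    intro y hy
    have h1 := ((Real.hasDerivAt_rpow_const (x := y) (p := α - 1)
      (Or.inl hy.ne')).mul_const c).div_const m
    have h2 := (Real.hasDerivAt_rpow_const (x := y) (p := α) (Or.inl hy.ne')).div_const α
    have h := h1.sub h2
    have e1 : y ^ (α - 1) = y ^ (α - 2) * y := by
      have := Real.rpow_add hy (α - 2) 1
      rw [Real.rpow_one] at this
      rw [show α - 1 = α - 2 + 1 by ring, this]
    have e2 : α - 1 - 1 = α - 2 := by ring
    have hmne : α - β ≠ 0 := by linarith
    have hαne : α ≠ 0 := by linarith
    refine h.congr_deriv ?_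
    rw [e2, e1, hx0def, hmdef]
    field_simp [hmne]
  have hmono : MonotoneOn φ (Set.Icc 0 x0) := by
    apply monotoneOn_of_deriv_nonneg (convex_Icc _ _) hcont.continuousOn
    · intro y hy
      rw [interior_Icc] at hy
      exact (hderiv y hy.1).differentiableAt.differentiableWithinAt
    · intro y hy
      rw [interior_Icc] at hy
      rw [(hderiv y hy.1).deriv]
      have : 0 ≤ y ^ (α - 2) := Real.rpow_nonneg hy.1.le _
      have : 0 ≤ x0 - y := by linarith [hy.2]
      positivity
  have hanti : AntitoneOn φ (Set.Icc x0 c) := by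
    apply antitoneOn_of_deriv_nonpos (convex_Icc _ _) hcont.continuousOn
    · intro y hy
      rw [interior_Icc] at hy
      exact (hderiv y (lt_trans hx0 hy.1)).differentiableAt.differentiableWithinAt
    · intro y hy
      rw [interior_Icc] at hy
      rw [(hderiv y (lt_trans hx0 hy.1)).deriv]
      have h1 : 0 ≤ y ^ (α - 2) := Real.rpow_nonneg (le_of_lt (lt_trans hx0 hy.1)) _
      have h2 : x0 - y ≤ 0 := by linarith [hy.1]
      exact mul_nonpos_of_nonneg_of_nonpos h1 h2
  have hkey : φ x ≤ φ x0 := by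
    rcases le_total x x0 with h | h
    · exact hmono ⟨hx.1, h⟩ ⟨hx0.le, le_rfl⟩ h
    · exact hanti ⟨le_rfl, hx0c⟩ ⟨h, hx.2⟩ h
  have e0 : x0 ^ (α - 1) = (α - 1) ^ (α - 1) * c ^ (α - 1) / m ^ (α - 1) := by
    rw [hx0def, Real.div_rpow (by positivity) hm.le, Real.mul_rpow (by linarith) hc.le]
  have ex : x0 ^ α = x0 ^ (α - 1) * x0 := by
    have := Real.rpow_add hx0 (α - 1) 1
    rw [Real.rpow_one, show α - 1 + 1 = α by ring] at this
    exact this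
  have ec : c ^ α = c ^ (α - 1) * c := by
    have := Real.rpow_add hc (α - 1) 1
    rw [Real.rpow_one, show α - 1 + 1 = α by ring] at this
    exact this
  have em : m ^ α = m ^ (α - 1) * m := by
    have := Real.rpow_add hm (α - 1) 1
    rw [Real.rpow_one, show α - 1 + 1 = α by ring] at this
    exact this
  have hval : φ x0 = (α - 1) ^ (α - 1) * c ^ α / (m ^ α * α) := by
    have hmp : (0:ℝ) < m ^ (α - 1) := Real.rpow_pos_of_pos hm _
    rw [hφdef]
    simp only
    rw [ex, e0, ec, em, hx0def]
    field_simp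
    ring
  calc φ x ≤ φ x0 := hkey
    _ = (α - 1) ^ (α - 1) * c ^ α / (m ^ α * α) := hval

end Stmt13Aux2

open Stmt13Aux Stmt13Aux2 in
theorem stmt_13 (α β a b K : ℝ) (hα : 1 < α) (hα2 : α ≤ 2) (hβ : 0 ≤ β)
    (hβα : β ≤ α - 1) (hab : a < b) (hK : 0 < K)
    (hc : K * (α - 1) ^ (α - 1) * (b - a) ^ α /
      ((α - β) ^ α * Real.Gamma (α + 1)) < 1)
    (f : ℝ → ℝ → ℝ)
    (hf : Continuous fun p : ℝ × ℝ => f p.1 p.2)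
    (hLip : ∀ t ∈ Set.Icc a b, ∀ u₁ u₂ : ℝ, |f t u₁ - f t u₂| ≤ K * |u₁ - u₂|) :
    ∀ u v : C(Set.Icc a b, ℝ), ∀ t ∈ Set.Icc a b,
      |(∫ s in a..b, G a b α β t s * f s (u (Set.projIcc a b hab.le s))) -
          ∫ s in a..b, G a b α β t s * f s (v (Set.projIcc a b hab.le s))| ≤
        K * (α - 1) ^ (α - 1) * (b - a) ^ α /
          ((α - β) ^ α * Real.Gamma (α + 1)) * ‖u - v‖ := by
  intro u v t ht
  have hΓ : 0 < Real.Gamma α := Real.Gamma_pos_of_pos (by linarith)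
  have hba : 0 < b - a := by linarith
  set hu : ℝ → ℝ := fun s => f s (u (Set.projIcc a b hab.le s)) with hhu
  set hv : ℝ → ℝ := fun s => f s (v (Set.projIcc a b hab.le s)) with hhv
  have hu_cont : Continuous hu :=
    hf.comp (continuous_id.prodMk (u.continuous.comp continuous_projIcc))
  have hv_cont : Continuous hv :=
    hf.comp (continuous_id.prodMk (v.continuous.comp continuous_projIcc))
  obtain ⟨Mu, hMu⟩ := isCompact_Icc.exists_bound_of_continuousOn
    (hu_cont.continuousOn : ContinuousOn hu (Set.Icc a b))
  obtain ⟨Mv, hMv⟩ := isCompact_Icc.exists_bound_of_continuousOn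
    (hv_cont.continuousOn : ContinuousOn hv (Set.Icc a b))
  set MG : ℝ := 1 / Real.Gamma α * (2 * (b - a) ^ (α - 1)) with hMG
  have hMG0 : 0 ≤ MG := by positivity
  have hGb : ∀ s ∈ Set.Icc a b, |G a b α β t s| ≤ MG :=
    fun s hs => G_bdd hα hβ hβα hab ht hs
  have IG : IntervalIntegrable (fun s => G a b α β t s) volume a b :=
    integrable_aux hab.le (measG a b α β t) hGb
  have Iu : IntervalIntegrable (fun s => G a b α β t s * hu s) volume a b := by
    apply integrable_aux hab.le ((measG a b α β t).mul hu_cont.measurable)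
      (M := MG * max Mu 0)
    intro s hs
    rw [Pi.mul_apply, abs_mul]
    apply mul_le_mul (hGb s hs) _ (abs_nonneg _) hMG0
    exact le_max_iff.mpr (Or.inl (by rw [← Real.norm_eq_abs]; exact hMu s hs))
  have Iv : IntervalIntegrable (fun s => G a b α β t s * hv s) volume a b := by
    apply integrable_aux hab.le ((measG a b α β t).mul hv_cont.measurable)
      (M := MG * max Mv 0)
    intro s hs
    rw [Pi.mul_apply, abs_mul]
    apply mul_le_mul (hGb s hs) _ (abs_nonneg _) hMG0
    exact le_max_iff.mpr (Or.inl (by rw [← Real.norm_eq_abs]; exact hMv s hs))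
  have hdist : ∀ s ∈ Set.Icc a b, |hu s - hv s| ≤ K * ‖u - v‖ := by
    intro s hs
    have h1 := hLip s hs (u (Set.projIcc a b hab.le s)) (v (Set.projIcc a b hab.le s))
    refine h1.trans (mul_le_mul_of_nonneg_left ?_ hK.le)
    have := ContinuousMap.norm_coe_le_norm (u - v) (Set.projIcc a b hab.le s)
    rwa [ContinuousMap.sub_apply, Real.norm_eq_abs] at this
  have step1 : (∫ s in a..b, G a b α β t s * hu s) - ∫ s in a..b, G a b α β t s * hv s
      = ∫ s in a..b, G a b α β t s * (hu s - hv s) := by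
    rw [← intervalIntegral.integral_sub Iu Iv]
    congr 1 with s
    ring
  have step3 : ∫ s in a..b, |G a b α β t s * (hu s - hv s)|
      ≤ ∫ s in a..b, G a b α β t s * (K * ‖u - v‖) := by
    have Idiff : IntervalIntegrable (fun s => G a b α β t s * (hu s - hv s)) volume a b := by
      simpa [mul_sub] using Iu.sub Iv
    apply intervalIntegral.integral_mono_on hab.le Idiff.abs (IG.mul_const _)
    intro s hs
    rw [abs_mul, abs_of_nonneg (G_nonneg hα hβ hβα hab ht hs)]
    exact mul_le_mul_of_nonneg_left (hdist s hs) (G_nonneg hα hβ hβα hab ht hs)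
  have hGle : (∫ s in a..b, G a b α β t s)
      ≤ (α - 1) ^ (α - 1) * (b - a) ^ α / ((α - β) ^ α * Real.Gamma (α + 1)) := by
    rw [G_integral hα hβ hβα hab ht, Real.Gamma_add_one (by linarith : α ≠ 0)]
    have hphi := phi_max hα hα2 hβ hβα hab
      (x := t - a) ⟨sub_nonneg.mpr ht.1, sub_le_sub_right ht.2 a⟩
    have h2 : 1 / Real.Gamma α * ((t - a) ^ (α - 1) * (b - a) / (α - β) - (t - a) ^ α / α)
        ≤ 1 / Real.Gamma α * ((α - 1) ^ (α - 1) * (b - a) ^ α / ((α - β) ^ α * α)) :=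
      mul_le_mul_of_nonneg_left hphi (by positivity)
    refine h2.trans (le_of_eq ?_)
    rw [one_div_mul_eq_div, div_div, mul_assoc]
  have habs : |(∫ s in a..b, G a b α β t s * hu s) - ∫ s in a..b, G a b α β t s * hv s|
      ≤ (∫ s in a..b, G a b α β t s) * (K * ‖u - v‖) := by
    rw [step1]
    refine (intervalIntegral.abs_integral_le_integral_abs hab.le).trans ?_
    have hsub : (fun s => G a b α β t s * (hu s - hv s))
        = fun s => G a b α β t s * hu s - G a b α β t s * hv s := by
      funext s; ring
    calc ∫ s in a..b, |G a b α β t s * (hu s - hv s)|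
        ≤ ∫ s in a..b, G a b α β t s * (K * ‖u - v‖) := step3
      _ = (∫ s in a..b, G a b α β t s) * (K * ‖u - v‖) :=
          intervalIntegral.integral_mul_const _ _
  refine habs.trans ?_
  have hKn : 0 ≤ K * ‖u - v‖ := mul_nonneg hK.le (norm_nonneg _)
  calc (∫ s in a..b, G a b α β t s) * (K * ‖u - v‖)
      ≤ ((α - 1) ^ (α - 1) * (b - a) ^ α / ((α - β) ^ α * Real.Gamma (α + 1)))
        * (K * ‖u - v‖) := mul_le_mul_of_nonneg_right hGle hKn
    _ = K * (α - 1) ^ (α - 1) * (b - a) ^ α /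
          ((α - β) ^ α * Real.Gamma (α + 1)) * ‖u - v‖ := by ring
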